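/- If a > 0, b ∈ ℝ, τ ∈ ℝ and X : ℝ → ℝ is a differentiable solution of X'(t) + a t X(t) = b X(t - τ) that is bounded on ℝ, then X(t) → 0 as |t| → ∞. In particular, the solution e^{-at²/2} with b = 0 converges to 0 at ±∞. -/

import Mathlib

open Filter

private lemma aux_top (a b τ : ℝ) (ha : 0 < a) (X : ℝ → ℝ)
    (hdiff : Differentiable ℝ X)
    (hDDE : ∀ t : ℝ, deriv X t + a * t * X t = b * X (t - τ))
    (M : ℝ) (hM : ∀ t : ℝ, |X t| ≤ M) :
    Tendsto X atTop (nhds 0) := by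
  set g : ℝ → ℝ := fun t => Real.exp (a * t ^ 2 / 2) with hg_def
  have hg : ∀ t : ℝ, HasDerivAt g (a * t * g t) t := by
    intro t
    have h1 : HasDerivAt (fun t : ℝ => a * t ^ 2 / 2) (a * t) t := by
      have := ((hasDerivAt_pow 2 t).const_mul a).div_const 2
      refine this.congr_deriv ?_
      ring
    have := h1.exp
    convert this using 1
    simp [hg_def]; ring
  have hY : ∀ s : ℝ, HasDerivAt (fun t => g t * X t) (g s * (b * X (s - τ))) s := by
    intro s
    have h2 := (hg s).mul (hdiff s).hasDerivAt
    refine h2.congr_deriv ?_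
    have h := hDDE s
    have hds : deriv X s = b * X (s - τ) - a * s * X s := by linarith
    rw [hds]; ring
  have hcontg : Continuous g := by
    exact Real.continuous_exp.comp (by continuity)
  have hcont : Continuous (fun s => g s * (b * X (s - τ))) :=
    hcontg.mul (continuous_const.mul (hdiff.continuous.comp (continuous_id.sub continuous_const)))
  have hint : ∀ t : ℝ, g t * X t - g 0 * X 0 = ∫ s in (0:ℝ)..t, g s * (b * X (s - τ)) := by
    intro t
    exact (intervalIntegral.integral_eq_sub_of_hasDerivAt (fun s _ => hY s)
      (hcont.intervalIntegrable 0 t)).symm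
  have hM0 : 0 ≤ M := le_trans (abs_nonneg _) (hM 0)
  have key : ∀ t : ℝ, 1 ≤ t →
      |X t| ≤ Real.exp (-(a * t ^ 2 / 2)) * |X 0| + |b| * M * (2 / (a * t)) := by
    intro t ht
    have ht0 : (0:ℝ) < t := lt_of_lt_of_le one_pos ht
    set c : ℝ := a * t / 2 with hc_def
    have hc : 0 < c := by positivity
    -- antiderivative of exp (c * s)
    have hF : ∀ s : ℝ, HasDerivAt (fun s => Real.exp (c * s) / c) (Real.exp (c * s)) s := by
      intro s
      have := (((hasDerivAt_id s).const_mul c).exp).div_const c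
      refine this.congr_deriv ?_
      field_simp
      rfl
    have hint2 : (∫ s in (0:ℝ)..t, Real.exp (c * s)) = Real.exp (c * t) / c - 1 / c := by
      rw [intervalIntegral.integral_eq_sub_of_hasDerivAt (fun s _ => hF s)
        ((Real.continuous_exp.comp (continuous_const.mul continuous_id)).intervalIntegrable 0 t)]
      simp
    -- bound the norm of the integral
    have hnorm : ‖∫ s in (0:ℝ)..t, g s * (b * X (s - τ))‖ ≤
        ∫ s in (0:ℝ)..t, Real.exp (c * s) * (|b| * M) := by
      calc ‖∫ s in (0:ℝ)..t, g s * (b * X (s - τ))‖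
          ≤ ∫ s in (0:ℝ)..t, ‖g s * (b * X (s - τ))‖ :=
            intervalIntegral.norm_integral_le_integral_norm ht0.le
        _ ≤ ∫ s in (0:ℝ)..t, Real.exp (c * s) * (|b| * M) := by
            apply intervalIntegral.integral_mono_on ht0.le
            · exact (hcont.norm).intervalIntegrable 0 t
            · exact ((Real.continuous_exp.comp (continuous_const.mul continuous_id)).mul
                continuous_const).intervalIntegrable 0 t
            · intro s hs
              obtain ⟨hs0, hst⟩ := hs
              have hgs : g s ≤ Real.exp (c * s) := by
                apply Real.exp_le_exp.2
                have : s * s ≤ t * s := mul_le_mul_of_nonneg_right hst hs0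
                rw [hc_def]
                nlinarith
              have h1 : ‖g s * (b * X (s - τ))‖ = g s * (|b| * |X (s - τ)|) := by
                rw [Real.norm_eq_abs, abs_mul, abs_mul, abs_of_pos (Real.exp_pos _)]
              rw [h1]
              have h2 : g s * (|b| * |X (s - τ)|) ≤ g s * (|b| * M) := by
                apply mul_le_mul_of_nonneg_left _ (Real.exp_pos _).le
                exact mul_le_mul_of_nonneg_left (hM _) (abs_nonneg _)
              refine h2.trans ?_
              exact mul_le_mul_of_nonneg_right hgs (by positivity)
    rw [intervalIntegral.integral_mul_const, hint2] at hnorm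
    have hi := hint t
    have hg0 : g 0 = 1 := by simp [hg_def]
    have hbound : |g t * X t| ≤ |X 0| + (Real.exp (c * t) / c - 1 / c) * (|b| * M) := by
      have : g t * X t = g 0 * X 0 + ∫ s in (0:ℝ)..t, g s * (b * X (s - τ)) := by linarith
      rw [this, hg0, one_mul]
      calc |X 0 + ∫ s in (0:ℝ)..t, g s * (b * X (s - τ))|
          ≤ |X 0| + ‖∫ s in (0:ℝ)..t, g s * (b * X (s - τ))‖ := abs_add_le _ _
        _ ≤ |X 0| + (Real.exp (c * t) / c - 1 / c) * (|b| * M) := by linarith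
    have hct : c * t = a * t ^ 2 / 2 := by rw [hc_def]; ring
    have hXt : |X t| = |g t * X t| * Real.exp (-(a * t ^ 2 / 2)) := by
      rw [abs_mul, abs_of_pos (Real.exp_pos _),
        mul_comm (Real.exp _) |X t|, mul_assoc, ← Real.exp_add]
      simp [hg_def]
    rw [hXt]
    have hexp_pos : (0:ℝ) < Real.exp (-(a * t ^ 2 / 2)) := Real.exp_pos _
    calc |g t * X t| * Real.exp (-(a * t ^ 2 / 2))
        ≤ (|X 0| + (Real.exp (c * t) / c - 1 / c) * (|b| * M)) * Real.exp (-(a * t ^ 2 / 2)) :=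
          mul_le_mul_of_nonneg_right hbound hexp_pos.le
      _ ≤ Real.exp (-(a * t ^ 2 / 2)) * |X 0| + |b| * M * (2 / (a * t)) := by
          rw [add_mul]
          apply add_le_add (le_of_eq (mul_comm _ _))
          have h3 : (Real.exp (c * t) / c - 1 / c) * (|b| * M) ≤ Real.exp (c * t) / c * (|b| * M) := by
            apply mul_le_mul_of_nonneg_right _ (by positivity)
            have : (0:ℝ) < 1 / c := by positivity
            linarith
          calc (Real.exp (c * t) / c - 1 / c) * (|b| * M) * Real.exp (-(a * t ^ 2 / 2))
              ≤ Real.exp (c * t) / c * (|b| * M) * Real.exp (-(a * t ^ 2 / 2)) :=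
                mul_le_mul_of_nonneg_right h3 hexp_pos.le
            _ = |b| * M * (2 / (a * t)) := by
                rw [hct]
                rw [show Real.exp (a * t ^ 2 / 2) / c * (|b| * M) * Real.exp (-(a * t ^ 2 / 2))
                  = (Real.exp (a * t ^ 2 / 2) * Real.exp (-(a * t ^ 2 / 2))) * (|b| * M) / c by ring]
                rw [← Real.exp_add]
                simp only [add_neg_cancel, Real.exp_zero, one_mul]
                rw [hc_def]
                field_simp
  -- now the squeeze
  have h1 : Tendsto (fun t : ℝ => Real.exp (-(a * t ^ 2 / 2)) * |X 0|) atTop (nhds 0) := by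
    have ha2 : Tendsto (fun t : ℝ => a * t ^ 2 / 2) atTop atTop := by
      apply Tendsto.atTop_div_const (by norm_num)
      exact (tendsto_pow_atTop (two_ne_zero)).const_mul_atTop ha
    have := (Real.tendsto_exp_neg_atTop_nhds_zero.comp ha2).mul_const |X 0|
    simpa using this
  have h2 : Tendsto (fun t : ℝ => |b| * M * (2 / (a * t))) atTop (nhds 0) := by
    have hat : Tendsto (fun t : ℝ => a * t) atTop atTop := tendsto_id.const_mul_atTop ha
    have := ((tendsto_const_nhds (α := ℝ) (x := (2:ℝ))).div_atTop hat).const_mul (|b| * M)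
    simpa using this
  refine squeeze_zero_norm'
    (a := fun t => Real.exp (-(a * t ^ 2 / 2)) * |X 0| + |b| * M * (2 / (a * t))) ?_ ?_
  · filter_upwards [eventually_ge_atTop (1:ℝ)] with t ht
    rw [Real.norm_eq_abs]
    exact key t ht
  · simpa using h1.add h2

theorem stmt_13 (a b τ : ℝ) (ha : 0 < a) (X : ℝ → ℝ)
    (hdiff : Differentiable ℝ X)
    (hDDE : ∀ t : ℝ, deriv X t + a * t * X t = b * X (t - τ))
    (hbdd : ∃ M : ℝ, ∀ t : ℝ, |X t| ≤ M) :
    Tendsto X atTop (nhds 0) ∧ Tendsto X atBot (nhds 0) := by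
  obtain ⟨M, hM⟩ := hbdd
  constructor
  · exact aux_top a b τ ha X hdiff hDDE M hM
  · set Z : ℝ → ℝ := fun t => X (-t) with hZ_def
    have hZdiff : Differentiable ℝ Z := hdiff.comp differentiable_neg
    have hZderiv : ∀ t : ℝ, deriv Z t = -deriv X (-t) := by
      intro t
      have h := ((hdiff (-t)).hasDerivAt.comp t (hasDerivAt_neg t))
      simpa [hZ_def, Function.comp_def] using h.deriv
    have hZDDE : ∀ t : ℝ, deriv Z t + a * t * Z t = (-b) * Z (t - (-τ)) := by
      intro t
      rw [hZderiv t]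
      have h := hDDE (-t)
      have : Z (t - -τ) = X (-t - τ) := by
        simp [hZ_def]; ring_nf
      rw [this]
      simp only [hZ_def]
      nlinarith [h]
    have hZM : ∀ t : ℝ, |Z t| ≤ M := fun t => hM (-t)
    have hZtop : Tendsto Z atTop (nhds 0) :=
      aux_top a (-b) (-τ) ha Z hZdiff hZDDE M hZM
    have : Tendsto (fun t => Z (-t)) atBot (nhds 0) :=
      hZtop.comp tendsto_neg_atBot_atTop
    simpa [hZ_def] using this
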